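/- Let S² be the simplicial set Δ²/∂Δ², with normalized chain complex N_•(S²; Z/2) having basis {e₀ in degree 0, e₂ in degree 2} and zero differential. The interval cut operation of the surjection (3,1,2,3,1) applied to e₂ equals e₂ ⊗ e₀ ⊗ e₂ in N_•(S²)^{⊗3} (mod 2). -/

import Mathlib

/- The interval cut operation (Berger–Fresse) for the simplicial set S² = Δ²/∂Δ²,
whose normalized Z/2-chains have basis e₀ (degree 0) and e₂ (degree 2) with zero
differential.  A surjection u ∈ X(3)_d acts on a t-simplex (t = 2 for e₂, t = 0 for
e₀) by summing over all interval cuts of [0,t]: choices of cut points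
0 ≤ n₁ ≤ … ≤ n_m ≤ t (m = length u − 1) dividing [0,t] into consecutive intervals
overlapping at their endpoints; the factor labelled j is the face of the simplex
spanned by the concatenation of the intervals labelled j.  In Δ²/∂Δ² a vertex list
gives e₀ if it is a single vertex, e₂ if it is (0,1,2), and 0 otherwise (degenerate
simplices and the collapsed boundary faces vanish in normalized chains). -/

noncomputable section

/-- Triple tensor power of N_•(S²;Z/2), as functions on the basis {e₀,e₂}³
(`false` = e₀, `true` = e₂). -/
abbrev C3 := Bool × Bool × Bool → ZMod 2

/-- The basis element `ea ⊗ eb ⊗ ec` of `C3`. -/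
def basis3 (a b c : Bool) : C3 := fun x => if x = (a, b, c) then 1 else 0

/-- All lists of `m` cut points with values in `[0, t]`. -/
def cutLists : ℕ → ℕ → List (List ℕ)
  | _, 0 => [[]]
  | t, m + 1 => (List.range (t + 1)).flatMap fun a => (cutLists t m).map fun l => a :: l

/-- The nondecreasing ones. -/
def cutsMono (t m : ℕ) : List (List ℕ) :=
  (cutLists t m).filter fun l => decide (List.IsChain (· ≤ ·) l)

/-- The consecutive intervals (as vertex lists, overlapping at endpoints) determined
by the cut points `c` of `[0, t]`. -/
def pieces (t : ℕ) (c : List ℕ) : List (List ℕ) :=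
  let bds := 0 :: c ++ [t]
  (bds.zip bds.tail).map fun p => List.range' p.1 (p.2 + 1 - p.1)

/-- The vertex list of the face labelled `j` under the surjection `u`. -/
def labelFace (u : List ℕ) (ps : List (List ℕ)) (j : ℕ) : List ℕ :=
  ((((u.zip ps).filter fun p => p.1 = j)).map Prod.snd).flatten

/-- The value of a vertex list in N_•(S²;Z/2): a single vertex gives e₀ (`false`),
the full simplex (0,1,2) gives e₂ (`true`), and anything else is 0 (`none`). -/
def faceVal (l : List ℕ) : Option Bool :=
  if l.length = 1 then some false else if l = [0, 1, 2] then some true else none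

/-- The contribution of one interval cut `c` for the surjection `u` on the t-simplex. -/
def cutTerm (t : ℕ) (u c : List ℕ) : C3 :=
  let ps := pieces t c
  match faceVal (labelFace u ps 1), faceVal (labelFace u ps 2), faceVal (labelFace u ps 3) with
  | some a, some b, some c' => basis3 a b c'
  | _, _, _ => 0

/-- The interval cut operation of the surjection `u ∈ X(3)` on the generating
t-simplex of S² (t = 2: e₂; t = 0: e₀), with values in N_•(S²;Z/2)^{⊗3}. -/
def AW3 (u : List ℕ) (t : ℕ) : C3 :=
  ((cutsMono t (u.length - 1)).map (cutTerm t u)).sum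

end

/- STATEMENT 9: The interval cut operation of the surjection (3,1,2,3,1) applied to
the fundamental 2-simplex e₂ of S² = Δ²/∂Δ² equals e₂ ⊗ e₀ ⊗ e₂ (mod 2). -/
lemma cutsMono_24 : cutsMono 2 4 = [[0, 0, 0, 0], [0, 0, 0, 1], [0, 0, 0, 2], [0, 0, 1, 1],
    [0, 0, 1, 2], [0, 0, 2, 2], [0, 1, 1, 1], [0, 1, 1, 2], [0, 1, 2, 2], [0, 2, 2, 2],
    [1, 1, 1, 1], [1, 1, 1, 2], [1, 1, 2, 2], [1, 2, 2, 2], [2, 2, 2, 2]] := by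
  simp [cutsMono, cutLists, List.filter_cons, List.isChain_cons_cons, List.range_succ]

theorem interval_cut_31231 :
    AW3 [3, 1, 2, 3, 1] 2 = basis3 true false true := by
  show ((cutsMono 2 4).map (cutTerm 2 [3, 1, 2, 3, 1])).sum = basis3 true false true
  rw [cutsMono_24]
  funext x
  obtain ⟨a, b, c⟩ := x
  fin_cases a <;> fin_cases b <;> fin_cases c <;> rfl
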